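/- Let A → B be a surjection of rings whose kernel I satisfies I² = 0 and is annihilated by a maximal ideal m of A such that A/m has characteristic prime to the order of a finite group G. Then for n ≥ 1, the map Hⁿ(G, A^×) → Hⁿ(G, B^×) is an isomorphism, where G acts trivially. -/

import Mathlib

open CategoryTheory

/-- The map of inhomogeneous cochain complexes induced by a morphism of representations,
given by postcomposition. -/
noncomputable def cochainsMap {k G : Type} [CommRing k] [Group G]
    {A B : Rep k G} (f : A ⟶ B) :
    groupCohomology.inhomogeneousCochains A ⟶ groupCohomology.inhomogeneousCochains B where
  f n := ModuleCat.ofHom ((f.hom.toLinearMap : A →ₗ[k] B).compLeft (Fin n → G))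
  comm' i j hij := by
    obtain rfl : i + 1 = j := hij
    rw [groupCohomology.inhomogeneousCochains.d_def, groupCohomology.inhomogeneousCochains.d_def]
    ext (x : (Fin i → G) → A) g
    simp [inhomogeneousCochains.d_hom_apply, Rep.hom_comm_apply, Function.comp_def]

/-- The map on group cohomology induced by a morphism of representations. -/
noncomputable def groupCohomologyMap {k G : Type} [CommRing k] [Group G]
    {A B : Rep k G} (f : A ⟶ B) (n : ℕ) :
    groupCohomology A n ⟶ groupCohomology B n :=
  HomologicalComplex.homologyMap (cochainsMap f) n

/-- The morphism of trivial representations induced by a linear map. -/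
def trivialRepHom {k G : Type} [CommRing k] [Group G]
    {M N : Type} [AddCommGroup M] [Module k M] [AddCommGroup N] [Module k N]
    (f : M →ₗ[k] N) : Rep.trivial k G M ⟶ Rep.trivial k G N :=
  Rep.ofHom ⟨f, fun _ => rfl⟩

/-- The `ℤ`-linear map on (additivized) unit groups induced by a ring homomorphism. -/
def unitsMapLinear {A B : Type} [CommRing A] [CommRing B] (f : A →+* B) :
    Additive Aˣ →ₗ[ℤ] Additive Bˣ :=
  (MonoidHom.toAdditive (Units.map (f : A →* B))).toIntLinearMap

lemma snoc_comp_succ' {α : Type*} {m : ℕ} (g : Fin (m+1) → α) (x : α) :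
    (Fin.snoc g x : Fin (m+2) → α) ∘ Fin.succ = Fin.snoc (g ∘ Fin.succ) x := by
  funext k
  refine Fin.lastCases ?_ (fun i => ?_) k
  · simp [Fin.succ_last]
  · simp only [Function.comp_apply, Fin.succ_castSucc, Fin.snoc_castSucc]

lemma contractNth_last' {α : Type*} {m : ℕ} (op : α → α → α) (g : Fin (m+1) → α) :
    Fin.contractNth (Fin.last m) op g = g ∘ Fin.castSucc := by
  funext k
  exact Fin.contractNth_apply_of_lt _ op g k k.isLt

lemma contractNth_snoc_castSucc {α : Type*} {m : ℕ} (op : α → α → α) (j : Fin m)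
    (g : Fin (m+1) → α) (x : α) :
    Fin.contractNth (j.castSucc.castSucc) op (Fin.snoc g x) =
      Fin.snoc (Fin.contractNth j.castSucc op g) x := by
  funext k
  refine Fin.lastCases ?_ (fun k' => ?_) k
  · rw [Fin.contractNth_apply_of_gt]
    · simp [Fin.succ_last]
    · simpa using j.isLt
  · rw [Fin.snoc_castSucc]
    rcases lt_trichotomy (k' : ℕ) (j : ℕ) with h | h | h
    · rw [Fin.contractNth_apply_of_lt _ _ _ _ (by simpa using h),
        Fin.contractNth_apply_of_lt _ _ _ _ (by simpa using h), Fin.snoc_castSucc]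
    · rw [Fin.contractNth_apply_of_eq _ _ _ _ (by simpa using h),
        Fin.contractNth_apply_of_eq _ _ _ _ (by simpa using h), Fin.succ_castSucc,
        Fin.snoc_castSucc, Fin.snoc_castSucc]
    · rw [Fin.contractNth_apply_of_gt _ _ _ _ (by simpa using h),
        Fin.contractNth_apply_of_gt _ _ _ _ (by simpa using h), Fin.succ_castSucc,
        Fin.snoc_castSucc]

lemma contractNth_snoc_last {α : Type*} {m : ℕ} (op : α → α → α)
    (g : Fin (m+1) → α) (x : α) :
    Fin.contractNth ((Fin.last m).castSucc) op (Fin.snoc g x) =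
      Fin.snoc (g ∘ Fin.castSucc) (op (g (Fin.last m)) x) := by
  funext k
  refine Fin.lastCases ?_ (fun k' => ?_) k
  · rw [Fin.contractNth_apply_of_eq _ _ _ _ (by simp), Fin.succ_last, Fin.snoc_last,
      Fin.snoc_last, Fin.snoc_castSucc]
  · rw [Fin.contractNth_apply_of_lt _ _ _ _ (by simpa using k'.isLt), Fin.snoc_castSucc,
      Fin.snoc_castSucc]
    rfl

open groupCohomology in
lemma exactAt_trivial_cochains {G : Type} [Group G] [Fintype G]
    {M : Type} [AddCommGroup M]
    (σ : M →+ M) (hσ : ∀ x : M, σ (Fintype.card G • x) = x)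
    (m : ℕ) :
    (inhomogeneousCochains (Rep.trivial ℤ G M)).ExactAt (m+1) := by
  classical
  rw [HomologicalComplex.exactAt_iff' _ m (m+1) (m+2) (by simp) (by simp)]
  rw [ShortComplex.moduleCat_exact_iff]
  intro φ hφ
  change (Fin (m+1) → G) → M at φ
  have hdφ : inhomogeneousCochains.d (Rep.trivial ℤ G M) (m+1) φ = 0 := by
    rw [← groupCohomology.inhomogeneousCochains.d_def]; exact hφ
  have hφ' : ∀ g : Fin (m+2) → G, (φ fun i => g i.succ) +
      ∑ j : Fin (m+2), (-1:ℤ)^((j:ℕ)+1) • φ (Fin.contractNth j (· * ·) g) = 0 := by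
    intro g
    have : _ = (0 : M) := congrFun hdφ g
    simpa [inhomogeneousCochains.d_hom_apply] using this
  set N := Fintype.card G with hN
  set S : (Fin m → G) → M := fun h => ∑ x : G, φ (Fin.snoc h x) with hSdef
  have tA : ∀ (g : Fin (m+1) → G) (j : Fin m),
      (∑ x : G, φ (Fin.contractNth (j.castSucc.castSucc) (· * ·) (Fin.snoc g x)))
        = S (Fin.contractNth j.castSucc (· * ·) g) :=
    fun g j => Finset.sum_congr rfl fun x _ => by rw [contractNth_snoc_castSucc]
  have tB : ∀ g : Fin (m+1) → G,
      (∑ x : G, φ (Fin.contractNth ((Fin.last m).castSucc) (· * ·) (Fin.snoc g x)))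
        = S (fun i => g i.castSucc) := by
    intro g
    have h1 : ∀ x : G, φ (Fin.contractNth ((Fin.last m).castSucc) (· * ·) (Fin.snoc g x))
        = φ (Fin.snoc (fun i => g i.castSucc) (g (Fin.last m) * x)) := by
      intro x
      rw [contractNth_snoc_last]
      rfl
    simp only [h1]
    exact Fintype.sum_bijective (fun x => g (Fin.last m) * x)
      (Group.mulLeft_bijective _) _ _ (fun x => rfl)
  have tC : ∀ g : Fin (m+1) → G,
      (∑ x : G, φ (Fin.contractNth (Fin.last (m+1)) (· * ·) (Fin.snoc g x))) = N • (φ g : M) := by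
    intro g
    have h1 : ∀ x : G, φ (Fin.contractNth (Fin.last (m+1)) (· * ·) (Fin.snoc g x)) = φ g := by
      intro x
      congr 1
      rw [contractNth_last']
      funext i
      simp
    simp only [h1]
    rw [Finset.sum_const, Finset.card_univ]
  have key : ∀ g : Fin (m+1) → G,
      S (fun i => g i.succ)
        + (((∑ j : Fin m, (-1:ℤ)^((j:ℕ)+1) • S (Fin.contractNth j.castSucc (· * ·) g))
          + (-1:ℤ)^(m+1) • S (fun i => g i.castSucc))
          + (-1:ℤ)^(m+1+1) • (N • (φ g : M))) = 0 := by
    intro g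
    have h0 : ∑ x : G, ((φ fun i => (Fin.snoc g x : Fin (m+2) → G) i.succ) +
        ∑ j : Fin (m+2), (-1:ℤ)^((j:ℕ)+1) • φ (Fin.contractNth j (· * ·) (Fin.snoc g x))) = 0 :=
      Finset.sum_eq_zero fun x _ => hφ' (Fin.snoc g x)
    rw [Finset.sum_add_distrib] at h0
    have e1 : (∑ x : G, φ fun i => (Fin.snoc g x : Fin (m+2) → G) i.succ)
        = S (fun i => g i.succ) := by
      refine Finset.sum_congr rfl fun x _ => ?_
      congr 1
      funext i
      exact congrFun (snoc_comp_succ' g x) i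
    have e2 : (∑ x : G, ∑ j : Fin (m+2),
          (-1:ℤ)^((j:ℕ)+1) • φ (Fin.contractNth j (· * ·) (Fin.snoc g x)))
        = ∑ j : Fin (m+2), (-1:ℤ)^((j:ℕ)+1) •
            (∑ x : G, φ (Fin.contractNth j (· * ·) (Fin.snoc g x))) := by
      rw [Finset.sum_comm]
      exact Finset.sum_congr rfl fun j _ => (Finset.smul_sum).symm
    rw [e1, e2, Fin.sum_univ_castSucc (n := m+1), Fin.sum_univ_castSucc (n := m)] at h0
    simp only [Fin.coe_castSucc, Fin.val_last] at h0
    rw [tC g, tB g] at h0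
    rw [Finset.sum_congr rfl (fun (j : Fin m) _ => by rw [tA g j])] at h0
    exact h0
  refine ⟨fun h => (-1:ℤ)^(m+1) • σ (S h), ?_⟩
  show (inhomogeneousCochains (Rep.trivial ℤ G M)).d m (m+1) _ = φ
  rw [groupCohomology.inhomogeneousCochains.d_def]
  funext g
  have hE : ((S fun i => g i.succ)
        + ∑ j : Fin (m+1), (-1:ℤ)^((j:ℕ)+1) • S (Fin.contractNth j (· * ·) g))
      = (-1:ℤ)^(m+1) • (N • (φ g : M)) := by
    have h1 := key g
    rw [Fin.sum_univ_castSucc (n := m)]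
    simp only [Fin.coe_castSucc, Fin.val_last]
    rw [contractNth_last']
    have h2 : (S fun i => g i.succ)
        + (((∑ j : Fin m, (-1:ℤ)^((j:ℕ)+1) • S (Fin.contractNth j.castSucc (· * ·) g))
          + (-1:ℤ)^(m+1) • S (fun i => g i.castSucc)))
        = -((-1:ℤ)^(m+1+1) • (N • (φ g : M))) := by
      refine eq_neg_of_add_eq_zero_left ?_
      rw [add_assoc] at h1
      rw [add_assoc, add_assoc]
      exact h1
    rw [← add_assoc] at h2
    have h3 : (g ∘ Fin.castSucc : Fin m → G) = fun i => g i.castSucc := rfl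
    rw [h3, ← add_assoc, h2, pow_succ, mul_neg_one, neg_smul, neg_neg]
  show (-1:ℤ)^(m+1) • σ (S fun i => g i.succ)
      + ∑ j : Fin (m+1), (-1:ℤ)^((j:ℕ)+1) •
          ((-1:ℤ)^(m+1) • σ (S (Fin.contractNth j (· * ·) g)))
      = (φ g : M)
  calc (-1:ℤ)^(m+1) • σ (S fun i => g i.succ)
      + ∑ j : Fin (m+1), (-1:ℤ)^((j:ℕ)+1) •
          ((-1:ℤ)^(m+1) • σ (S (Fin.contractNth j (· * ·) g)))
      = (-1:ℤ)^(m+1) • σ ((S fun i => g i.succ)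
          + ∑ j : Fin (m+1), (-1:ℤ)^((j:ℕ)+1) • S (Fin.contractNth j (· * ·) g)) := by
        rw [map_add, smul_add]
        congr 1
        rw [map_sum, Finset.smul_sum]
        refine Finset.sum_congr rfl fun j _ => ?_
        rw [map_zsmul, smul_comm]
    _ = (-1:ℤ)^(m+1) • σ ((-1:ℤ)^(m+1) • (N • (φ g : M))) := by rw [hE]
    _ = (φ g : M) := by
        rw [map_zsmul, hσ, smul_smul, ← pow_add, Even.neg_one_pow ⟨m+1, rfl⟩, one_smul]

/-- Let `A → B` be a surjection of rings whose kernel `I` satisfies `I² = 0` and is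
annihilated by a maximal ideal `m` of `A` such that `A/m` has characteristic prime to
the order of a finite group `G`.  Then for `n ≥ 1`, the map
`Hⁿ(G, A^×) → Hⁿ(G, B^×)` is an isomorphism, where `G` acts trivially. -/
theorem groupCohomology_units_of_square_zero_extension_iso
    (G : Type) [Group G] [Finite G]
    (A B : Type) [CommRing A] [CommRing B]
    (f : A →+* B) (hf : Function.Surjective f)
    (hsq : RingHom.ker f * RingHom.ker f = ⊥)
    (m : Ideal A) (hm : m.IsMaximal)
    (hann : ∀ a ∈ m, ∀ x ∈ RingHom.ker f, a * x = 0)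
    (hchar : (Nat.card G : A ⧸ m) ≠ 0)
    (n : ℕ) (hn : 1 ≤ n) :
    IsIso (groupCohomologyMap (trivialRepHom (G := G) (unitsMapLinear f)) n) := by
  classical
  have : Fintype G := Fintype.ofFinite G
  have hmul : ∀ x y : A, x ∈ RingHom.ker f → y ∈ RingHom.ker f → x * y = 0 := by
    intro x y hx hy
    have h : x * y ∈ RingHom.ker f * RingHom.ker f := Ideal.mul_mem_mul hx hy
    rw [hsq] at h
    simpa using h
  have hunit : ∀ i : RingHom.ker f, (1 + (i:A)) * (1 - (i:A)) = 1 := by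
    intro i
    have h := hmul i i i.2 i.2
    linear_combination -h
  -- the additive-to-multiplicative map i ↦ 1 + i
  let e : RingHom.ker f →+ Additive Aˣ :=
    { toFun := fun i => Additive.ofMul (Units.mkOfMulEqOne (1 + (i:A)) (1 - (i:A)) (hunit i))
      map_zero' := by
        show Additive.ofMul (Units.mkOfMulEqOne (1 + ((0:RingHom.ker f):A))
          (1 - ((0:RingHom.ker f):A)) (hunit 0)) = 0
        have h : (Units.mkOfMulEqOne (1 + ((0: RingHom.ker f):A)) (1 - ((0:RingHom.ker f):A))
            (hunit 0)) = 1 := Units.ext (by simp)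
        rw [h]
        rfl
      map_add' := by
        intro i j
        show Additive.ofMul _ = Additive.ofMul _ + Additive.ofMul _
        rw [← ofMul_mul]
        refine congrArg Additive.ofMul (Units.ext ?_)
        show (1 : A) + ((i:A) + (j:A)) = (1 + (i:A)) * (1 + (j:A))
        have h := hmul i j i.2 j.2
        linear_combination -h }
  have einj : Function.Injective e := by
    intro i j h
    have h2 := congrArg (fun a : Additive Aˣ => ((Additive.toMul a : Aˣ) : A)) h
    exact Subtype.ext (add_left_cancel (show (1:A) + (i:A) = 1 + (j:A) from h2))
  have hker : ∀ a : Additive Aˣ, unitsMapLinear f a = 0 → ∃ i, e.toIntLinearMap i = a := by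
    intro a ha
    have hu : (Units.map (f : A →* B)) a.toMul = 1 := ha
    have hval : f ((a.toMul : Aˣ) : A) = 1 := by
      have := congrArg Units.val hu
      simpa using this
    have hmem : ((a.toMul : Aˣ) : A) - 1 ∈ RingHom.ker f := by
      rw [RingHom.mem_ker, map_sub, hval, map_one, sub_self]
    refine ⟨⟨((a.toMul : Aˣ) : A) - 1, hmem⟩, ?_⟩
    show Additive.ofMul (Units.mkOfMulEqOne _ _
      (hunit ⟨((a.toMul : Aˣ) : A) - 1, hmem⟩)) = a
    refine congrArg Additive.ofMul (Units.ext ?_)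
    show (1:A) + (((Additive.toMul a : Aˣ):A) - 1) = ((Additive.toMul a : Aˣ):A)
    ring
  have hcompzero : ∀ i : RingHom.ker f, unitsMapLinear f (e.toIntLinearMap i) = 0 := by
    intro i
    show Additive.ofMul ((Units.map (f : A →* B)) (e i).toMul) = 0
    have h : (Units.map (f : A →* B)) (e i).toMul = 1 := by
      refine Units.ext ?_
      show f (1 + (i:A)) = 1
      have h2 : f (i:A) = 0 := i.2
      rw [map_add, map_one, h2, add_zero]
    rw [h]
    rfl
  have hsurj : Function.Surjective (unitsMapLinear f) := by
    intro v
    obtain ⟨a, ha⟩ := hf ((v.toMul : Bˣ) : B)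
    obtain ⟨a', ha'⟩ := hf (((v.toMul)⁻¹ : Bˣ) : B)
    have hk : a * a' - 1 ∈ RingHom.ker f := by
      rw [RingHom.mem_ker, map_sub, map_mul, ha, ha', map_one]
      simp
    have hone : a * (a' * (1 - (a * a' - 1))) = 1 := by
      have h := hmul _ _ hk hk
      linear_combination -h
    refine ⟨Additive.ofMul (Units.mkOfMulEqOne a (a' * (1 - (a * a' - 1))) hone), ?_⟩
    show Additive.ofMul ((Units.map (f : A →* B))
      (Units.mkOfMulEqOne a (a' * (1 - (a * a' - 1))) hone)) = v
    have h : (Units.map (f : A →* B)) (Units.mkOfMulEqOne a (a' * (1 - (a * a' - 1))) hone)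
        = v.toMul := Units.ext (by simpa using ha)
    rw [h]
    rfl
  -- the short exact sequence of cochain complexes
  let ι : Rep.trivial ℤ G (RingHom.ker f) ⟶ Rep.trivial ℤ G (Additive Aˣ) :=
    trivialRepHom e.toIntLinearMap
  let π : Rep.trivial ℤ G (Additive Aˣ) ⟶ Rep.trivial ℤ G (Additive Bˣ) :=
    trivialRepHom (G := G) (unitsMapLinear f)
  have hcomp : cochainsMap ι ≫ cochainsMap π = 0 := by
    refine HomologicalComplex.hom_ext _ _ fun j => ModuleCat.hom_ext (LinearMap.ext fun φ => ?_)
    funext g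
    show unitsMapLinear f (e.toIntLinearMap (φ g)) = 0
    exact hcompzero (φ g)
  let CS : ShortComplex (HomologicalComplex (ModuleCat ℤ) (ComplexShape.up ℕ)) :=
    ShortComplex.mk (cochainsMap ι) (cochainsMap π) hcomp
  have hSE : CS.ShortExact := by
    rw [HomologicalComplex.shortExact_iff_degreewise_shortExact]
    intro i
    refine { exact := ?_, mono_f := ?_, epi_g := ?_ }
    · rw [ShortComplex.moduleCat_exact_iff]
      intro φ hφ
      refine ⟨fun g => Classical.choose (hker (φ g) (congrFun hφ g)), ?_⟩
      funext g
      exact Classical.choose_spec (hker (φ g) (congrFun hφ g))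
    · rw [ModuleCat.mono_iff_injective]
      intro φ ψ h
      funext g
      exact einj (congrFun h g)
    · rw [ModuleCat.epi_iff_surjective]
      intro ψ
      refine ⟨fun g => Classical.choose (hsurj (ψ g)), ?_⟩
      funext g
      exact Classical.choose_spec (hsurj (ψ g))
  -- the scalar inverting the order of G on the kernel
  have hNm : (Nat.card G : A) ∉ m := by
    intro hmem
    apply hchar
    have h : (Ideal.Quotient.mk m) ((Nat.card G : A)) = 0 :=
      (Ideal.Quotient.eq_zero_iff_mem).2 hmem
    simpa using h
  obtain ⟨c, i, him, hci⟩ := hm.exists_inv hNm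
  have hcm : c * (Nat.card G : A) - 1 ∈ m := by
    have h : c * (Nat.card G : A) - 1 = -i := by linear_combination hci
    rw [h]
    exact m.neg_mem him
  let σ : RingHom.ker f →+ RingHom.ker f := AddMonoidHom.mk' (fun x => c • x)
    (fun x y => smul_add c x y)
  have hσ : ∀ x : RingHom.ker f, σ (Fintype.card G • x) = x := by
    intro x
    show c • ((Fintype.card G) • x) = x
    rw [← Nat.cast_smul_eq_nsmul A, smul_smul]
    have h1 : ((c * (Fintype.card G : A)) - 1) • x = 0 := by
      refine Subtype.ext ?_
      show ((c * (Fintype.card G : A)) - 1) * (x : A) = 0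
      refine hann _ ?_ _ x.2
      simpa [Nat.card_eq_fintype_card] using hcm
    rw [sub_smul, one_smul] at h1
    exact sub_eq_zero.1 h1
  have hvanish : ∀ j : ℕ, 1 ≤ j → Limits.IsZero (CS.X₁.homology j) := by
    intro j hj
    obtain ⟨j', rfl⟩ : ∃ j', j = j' + 1 := ⟨j - 1, (Nat.succ_pred_eq_of_pos hj).symm⟩
    exact (HomologicalComplex.exactAt_iff_isZero_homology _ _).1
      (exactAt_trivial_cochains σ hσ j')
  have h1 : Limits.IsZero (CS.X₁.homology n) := hvanish n hn
  have h2 : Limits.IsZero (CS.X₁.homology (n+1)) := hvanish (n+1) (by omega)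
  have hmono : Mono (HomologicalComplex.homologyMap CS.g n) :=
    (hSE.homology_exact₂ n).mono_g (h1.eq_of_src _ _)
  have hepi : Epi (HomologicalComplex.homologyMap CS.g n) :=
    (hSE.homology_exact₃ n (n+1) rfl).epi_f (h2.eq_of_tgt _ _)
  exact isIso_of_mono_of_epi (HomologicalComplex.homologyMap CS.g n)
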